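/- Let A be an invertible m×m complex matrix, B an n×n matrix, U an n×m matrix, V an m×n matrix with m ≥ n. If U A⁻¹ V and A + V B U are both invertible, then (U A⁻¹ V)⁻¹ + B is invertible and U (A + V B U)⁻¹ V = ((U A⁻¹ V)⁻¹ + B)⁻¹. -/

import Mathlib

set_option maxHeartbeats 1000000 in
theorem stmt_0 (m n : ℕ) (hmn : m ≥ n)
    (A : Matrix (Fin m) (Fin m) ℂ) (B : Matrix (Fin n) (Fin n) ℂ)
    (U : Matrix (Fin n) (Fin m) ℂ) (V : Matrix (Fin m) (Fin n) ℂ)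
    (hA : IsUnit A) (hUAV : IsUnit (U * A⁻¹ * V)) (hAVBU : IsUnit (A + V * B * U)) :
    IsUnit ((U * A⁻¹ * V)⁻¹ + B) ∧
      U * (A + V * B * U)⁻¹ * V = ((U * A⁻¹ * V)⁻¹ + B)⁻¹ := by
  set M := A + V * B * U with hMdef
  set S := U * A⁻¹ * V with hSdef
  have hA1 : A * A⁻¹ = 1 := Matrix.mul_nonsing_inv A (Matrix.isUnit_iff_isUnit_det A |>.mp hA)
  have hM1 : M⁻¹ * M = 1 :=
    Matrix.nonsing_inv_mul M (Matrix.isUnit_iff_isUnit_det M |>.mp hAVBU)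
  have hS1 : S * S⁻¹ = 1 := Matrix.mul_nonsing_inv S (Matrix.isUnit_iff_isUnit_det S |>.mp hUAV)
  have e1 : U * M⁻¹ * (V * B * U) = U - U * M⁻¹ * A := by
    have hVBU : V * B * U = M - A := by rw [hMdef]; abel
    rw [hVBU, Matrix.mul_sub]
    rw [show U * M⁻¹ * M = U * (M⁻¹ * M) from Matrix.mul_assoc _ _ _, hM1, Matrix.mul_one]
  have e2 : U * M⁻¹ * (V * B * U) * (A⁻¹ * V * S⁻¹)
      = (U - U * M⁻¹ * A) * (A⁻¹ * V * S⁻¹) := by rw [e1]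
  have e3 : U * M⁻¹ * V * B = 1 - U * M⁻¹ * V * S⁻¹ := by
    calc U * M⁻¹ * V * B
        = U * M⁻¹ * V * B * 1 := by rw [Matrix.mul_one]
      _ = U * M⁻¹ * V * B * (S * S⁻¹) := by rw [hS1]
      _ = U * M⁻¹ * (V * B * U) * (A⁻¹ * V * S⁻¹) := by
          simp only [hSdef, Matrix.mul_assoc]
      _ = (U - U * M⁻¹ * A) * (A⁻¹ * V * S⁻¹) := e2
      _ = U * A⁻¹ * V * S⁻¹ - U * M⁻¹ * (A * A⁻¹) * V * S⁻¹ := by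
          rw [Matrix.sub_mul]; simp only [Matrix.mul_assoc]
      _ = S * S⁻¹ - U * M⁻¹ * V * S⁻¹ := by rw [hA1, Matrix.mul_one, hSdef]
      _ = 1 - U * M⁻¹ * V * S⁻¹ := by rw [hS1]
  have key : (U * M⁻¹ * V) * (S⁻¹ + B) = 1 := by
    rw [Matrix.mul_add, e3]
    abel
  have key2 : (S⁻¹ + B) * (U * M⁻¹ * V) = 1 := (mul_eq_one_comm).mp key
  exact ⟨IsUnit.of_mul_eq_one _ key2, (Matrix.inv_eq_left_inv key).symm⟩
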